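/- If p ∈ 𝒫_n, then for every n̂ with 1 ≤ n̂ ≤ n and every r ∈ {0,...,n̂-1}, the sum Σ_{k ≡ r (mod n̂)} a_k of the coefficients of p over each residue class mod n̂ is nonnegative. -/

import Mathlib

open Polynomial Matrix

/-- `Pn n p` means the real polynomial `p` preserves entrywise nonnegativity of all
`n`-by-`n` nonnegative real matrices. -/
def Pn (n : ℕ) (p : Polynomial ℝ) : Prop :=
  ∀ A : Matrix (Fin n) (Fin n) ℝ, (∀ i j, 0 ≤ A i j) →
    ∀ i j, 0 ≤ ((Polynomial.aeval A) p) i j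

/-- The `r mod n`-part of a real polynomial. -/
noncomputable def rpart (p : Polynomial ℝ) (n r : ℕ) : Polynomial ℝ :=
  ∑ j ∈ Finset.range (p.natDegree + 1),
    if j % n = r then Polynomial.C (p.coeff j) * Polynomial.X ^ j else 0

theorem stmt_16 (n : ℕ) (p : Polynomial ℝ) (hp : Pn n p) :
    ∀ nhat, 1 ≤ nhat → nhat ≤ n → ∀ r < nhat,
      0 ≤ ∑ k ∈ Finset.range (p.natDegree + 1), if k % nhat = r then p.coeff k else 0 := by
  intro nhat h1 hn r hr
  have hn0 : 0 < n := lt_of_lt_of_le h1 hn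
  -- the function implementing the cycle (0 1 ... nhat-1) on Fin n, fixing the rest
  set f : Fin n → Fin n := fun j =>
    if h : (j : ℕ) + 1 < nhat then ⟨(j : ℕ) + 1, lt_of_lt_of_le h hn⟩
    else if (j : ℕ) < nhat then ⟨0, hn0⟩ else j with hf
  set A : Matrix (Fin n) (Fin n) ℝ := fun i j => if i = f j then 1 else 0 with hA
  have hAnn : ∀ i j, 0 ≤ A i j := by
    intro i j
    rw [hA]
    dsimp only
    split_ifs <;> norm_num
  have hpow : ∀ k (i j : Fin n), (A ^ k) i j = if i = f^[k] j then 1 else 0 := by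
    intro k
    induction k with
    | zero => intro i j; simp [Matrix.one_apply]; congr
    | succ k ih =>
      intro i j
      rw [pow_succ]
      have hmul : (A ^ k * A) i j = ∑ l, (A ^ k) i l * A l j := rfl
      rw [hmul, Finset.sum_eq_single (f j)]
      · rw [ih, hA]
        simp [Function.iterate_succ_apply]
        congr
      · intro l _ hl
        rw [hA]
        simp [if_neg hl]
      · intro h; exact absurd (Finset.mem_univ (f j)) h
  set z : Fin n := ⟨0, hn0⟩ with hz
  set r' : Fin n := ⟨r, lt_of_lt_of_le hr hn⟩ with hr'
  have hiter : ∀ k, ((f^[k] z : Fin n) : ℕ) = k % nhat := by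
    intro k
    induction k with
    | zero => simp [hz]
    | succ k ih =>
      rw [Function.iterate_succ_apply']
      have hklt : k % nhat < nhat := Nat.mod_lt _ h1
      have hmod : (k + 1) % nhat = (k % nhat + 1) % nhat := by
        conv_lhs => rw [← Nat.mod_add_div k nhat]
        rw [Nat.add_right_comm, Nat.add_mul_mod_self_left]
      rw [hf]
      dsimp only
      rw [ih]
      split_ifs with h2
      · rw [hmod, Nat.mod_eq_of_lt h2]
      · have hh : k % nhat + 1 = nhat := by omega
        rw [hmod, hh, Nat.mod_self]
  have key := hp A hAnn r' z
  rw [Polynomial.aeval_eq_sum_range] at key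
  simp only [Finset.sum_apply, Matrix.sum_apply, Matrix.smul_apply, smul_eq_mul, hpow] at key
  refine le_trans key (le_of_eq (Finset.sum_congr rfl ?_))
  intro k _
  have hiff : (r' = f^[k] z) ↔ (k % nhat = r) := by
    rw [Fin.ext_iff, hiter k, hr']
    exact eq_comm
  by_cases h : k % nhat = r
  · rw [if_pos (hiff.mpr h), if_pos h, mul_one]
  · rw [if_neg (fun hh => h (hiff.mp hh)), if_neg h, mul_zero]
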